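/- Let σ₁, σ₂ be commuting involutive automorphisms of a Lie algebra 𝔤 (characteristic 0), with eigenspace decompositions 𝔤 = 𝔨ᵢ ⊕ 𝔭ᵢ. Suppose 𝔨₁ ∩ 𝔨₂ = 𝔰₁ ⊕ 𝔰₂ as a direct sum of ideals of 𝔨₁ ∩ 𝔨₂, 𝔨₁' := 𝔰₂ ⊕ (𝔨₁ ∩ 𝔭₂) and 𝔨₂' := 𝔰₁ ⊕ (𝔨₂ ∩ 𝔭₁) are Lie subalgebras, and 𝔨₁ = 𝔰₁ ⊕ 𝔨₁'. Let L̃ = {Σⱼ ξⱼλʲ : ξⱼ ∈ 𝔨₁ for j even, ξⱼ ∈ 𝔭₁ for j odd} (Laurent polynomials), L̃₊ = {ξ ∈ L̃ : ξ₋ⱼ = σ₂(ξⱼ) for all j, and ξ(1) ∈ 𝔨₂'}, and L̃₋ = {Σ_{j≤0} ξⱼλʲ ∈ L̃ : ξ₀ ∈ 𝔨₁'}. Then L̃ = L̃₊ ⊕ L̃₋ as vector spaces. -/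

import Mathlib

section TwistedUK

variable {K : Type*} [Field K] {g : Type*} [LieRing g] [LieAlgebra K g]

/-- Membership in 𝔨₁' = 𝔰₂ ⊕ 𝔮₁ where 𝔮₁ = 𝔨₁ ∩ 𝔭₂. -/
def MemK1' (σ₁ σ₂ : g →ₗ[K] g) (s₂ : Submodule K g) (x : g) : Prop :=
  ∃ a ∈ s₂, ∃ b : g, σ₁ b = b ∧ σ₂ b = -b ∧ x = a + b

/-- Membership in 𝔨₂' = 𝔰₁ ⊕ 𝔮₂ where 𝔮₂ = 𝔨₂ ∩ 𝔭₁. -/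
def MemK2' (σ₁ σ₂ : g →ₗ[K] g) (s₁ : Submodule K g) (x : g) : Prop :=
  ∃ a ∈ s₁, ∃ b : g, σ₂ b = b ∧ σ₁ b = -b ∧ x = a + b

/-- Membership in L̃: Laurent polynomial loops with even coefficients in 𝔨₁ and
odd coefficients in 𝔭₁. -/
def MemLt (σ₁ : g →ₗ[K] g) (c : ℤ →₀ g) : Prop :=
  ∀ j : ℤ, (Even j → σ₁ (c j) = c j) ∧ (Odd j → σ₁ (c j) = -(c j))

/-- Membership in L̃₊: ξ ∈ L̃ with ξ₋ⱼ = σ₂(ξⱼ) for all j and ξ(1) = Σⱼ ξⱼ ∈ 𝔨₂'. -/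
def MemLtPlus (σ₁ σ₂ : g →ₗ[K] g) (s₁ : Submodule K g) (c : ℤ →₀ g) : Prop :=
  MemLt σ₁ c ∧ (∀ j : ℤ, c (-j) = σ₂ (c j)) ∧ MemK2' σ₁ σ₂ s₁ (c.sum fun _ x => x)

/-- Membership in L̃₋: ξ ∈ L̃ with only nonpositive powers and ξ₀ ∈ 𝔨₁'. -/
def MemLtMinus (σ₁ σ₂ : g →ₗ[K] g) (s₂ : Submodule K g) (c : ℤ →₀ g) : Prop :=
  MemLt σ₁ c ∧ (∀ j : ℤ, 0 < j → c j = 0) ∧ MemK1' σ₁ σ₂ s₂ (c 0)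

/-- The splitting theorem for the twisted U/K₁-hierarchy:
under the stated hypotheses on the commuting involutions σ₁, σ₂ and the
decompositions 𝔨₁∩𝔨₂ = 𝔰₁ ⊕ 𝔰₂, 𝔨₁ = 𝔰₁ ⊕ 𝔨₁', every A ∈ L̃ splits uniquely
as A = ξ + η with ξ ∈ L̃₊ and η ∈ L̃₋. -/
private lemma memK1'_add {σ₁ σ₂ : g →ₗ[K] g} {s₂ : Submodule K g} {x y : g}
    (hx : MemK1' σ₁ σ₂ s₂ x) (hy : MemK1' σ₁ σ₂ s₂ y) : MemK1' σ₁ σ₂ s₂ (x + y) := by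
  obtain ⟨a, ha, b, hb1, hb2, rfl⟩ := hx
  obtain ⟨a', ha', b', hb1', hb2', rfl⟩ := hy
  refine ⟨a + a', add_mem ha ha', b + b', by rw [map_add, hb1, hb1'], ?_, by abel⟩
  rw [map_add, hb2, hb2']; abel

private lemma memK1'_sub {σ₁ σ₂ : g →ₗ[K] g} {s₂ : Submodule K g} {x y : g}
    (hx : MemK1' σ₁ σ₂ s₂ x) (hy : MemK1' σ₁ σ₂ s₂ y) : MemK1' σ₁ σ₂ s₂ (x - y) := by
  obtain ⟨a, ha, b, hb1, hb2, rfl⟩ := hx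
  obtain ⟨a', ha', b', hb1', hb2', rfl⟩ := hy
  refine ⟨a - a', sub_mem ha ha', b - b', by rw [map_sub, hb1, hb1'], ?_, by abel⟩
  rw [map_sub, hb2, hb2']; abel

private lemma memK2'_sub {σ₁ σ₂ : g →ₗ[K] g} {s₁ : Submodule K g} {x y : g}
    (hx : MemK2' σ₁ σ₂ s₁ x) (hy : MemK2' σ₁ σ₂ s₁ y) : MemK2' σ₁ σ₂ s₁ (x - y) := by
  obtain ⟨a, ha, b, hb1, hb2, rfl⟩ := hx
  obtain ⟨a', ha', b', hb1', hb2', rfl⟩ := hy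
  refine ⟨a - a', sub_mem ha ha', b - b', by rw [map_sub, hb1, hb1'], ?_, by abel⟩
  rw [map_sub, hb2, hb2']; abel

private lemma memLt_sub {σ₁ : g →ₗ[K] g} {c₁ c₂ : ℤ →₀ g}
    (h1 : MemLt σ₁ c₁) (h2 : MemLt σ₁ c₂) : MemLt σ₁ (c₁ - c₂) := by
  intro j
  constructor
  · intro he
    rw [Finsupp.sub_apply, map_sub, (h1 j).1 he, (h2 j).1 he]
  · intro ho
    rw [Finsupp.sub_apply, map_sub, (h1 j).2 ho, (h2 j).2 ho]; abel

theorem twisted_UK_hierarchy_splitting [CharZero K]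
    (σ₁ σ₂ : g →ₗ[K] g)
    (hinv1 : ∀ x, σ₁ (σ₁ x) = x) (hinv2 : ∀ x, σ₂ (σ₂ x) = x)
    (hbr1 : ∀ x y : g, σ₁ ⁅x, y⁆ = ⁅σ₁ x, σ₁ y⁆)
    (hbr2 : ∀ x y : g, σ₂ ⁅x, y⁆ = ⁅σ₂ x, σ₂ y⁆)
    (hcomm : ∀ x, σ₁ (σ₂ x) = σ₂ (σ₁ x))
    (s₁ s₂ : Submodule K g)
    (hs1 : ∀ x ∈ s₁, σ₁ x = x ∧ σ₂ x = x)
    (hs2 : ∀ x ∈ s₂, σ₁ x = x ∧ σ₂ x = x)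
    -- 𝔨₁ ∩ 𝔨₂ = 𝔰₁ ⊕ 𝔰₂
    (hkk : ∀ x : g, σ₁ x = x → σ₂ x = x →
      ∃! p : g × g, p.1 ∈ s₁ ∧ p.2 ∈ s₂ ∧ x = p.1 + p.2)
    -- 𝔰₁, 𝔰₂ are ideals of 𝔨₁ ∩ 𝔨₂
    (hid1 : ∀ x y : g, σ₁ x = x → σ₂ x = x → y ∈ s₁ → ⁅x, y⁆ ∈ s₁)
    (hid2 : ∀ x y : g, σ₁ x = x → σ₂ x = x → y ∈ s₂ → ⁅x, y⁆ ∈ s₂)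
    -- 𝔨₁' and 𝔨₂' are Lie subalgebras
    (hk1' : ∀ x y : g, MemK1' σ₁ σ₂ s₂ x → MemK1' σ₁ σ₂ s₂ y → MemK1' σ₁ σ₂ s₂ ⁅x, y⁆)
    (hk2' : ∀ x y : g, MemK2' σ₁ σ₂ s₁ x → MemK2' σ₁ σ₂ s₁ y → MemK2' σ₁ σ₂ s₁ ⁅x, y⁆)
    -- 𝔨₁ = 𝔰₁ ⊕ 𝔨₁'
    (hk1dec : ∀ x : g, σ₁ x = x →
      ∃! p : g × g, p.1 ∈ s₁ ∧ MemK1' σ₁ σ₂ s₂ p.2 ∧ x = p.1 + p.2)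
    (A : ℤ →₀ g) (hA : MemLt σ₁ A) :
    ∃! p : (ℤ →₀ g) × (ℤ →₀ g),
      MemLtPlus σ₁ σ₂ s₁ p.1 ∧ MemLtMinus σ₁ σ₂ s₂ p.2 ∧ A = p.1 + p.2 := by
  classical
  have h2 : (2:K) ≠ 0 := by norm_num
  have hdouble : ∀ b : g, b + b = 0 → b = 0 := by
    intro b hb
    have h := two_smul K b
    rw [hb] at h
    rcases smul_eq_zero.mp h with h' | h'
    · exact absurd h' h2
    · exact h'
  have hs12 : ∀ x : g, x ∈ s₁ → x ∈ s₂ → x = 0 := by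
    intro x hx1 hx2
    obtain ⟨p, -, hu⟩ := hkk x (hs1 x hx1).1 (hs1 x hx1).2
    have e1 := hu (x, 0) ⟨hx1, s₂.zero_mem, (add_zero x).symm⟩
    have e2 := hu (0, x) ⟨s₁.zero_mem, hx2, (zero_add x).symm⟩
    have e3 : (x, (0:g)) = ((0:g), x) := e1.trans e2.symm
    exact congrArg Prod.fst e3
  have hK1fix : ∀ x : g, MemK1' σ₁ σ₂ s₂ x → σ₂ x = x → x ∈ s₂ := by
    intro x hx hfix
    obtain ⟨a, ha, b, hb1, hb2, rfl⟩ := hx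
    have he : a + -b = a + b := by
      calc a + -b = σ₂ (a + b) := by rw [map_add, (hs2 a ha).2, hb2]
        _ = a + b := hfix
    have hnb : -b = b := add_left_cancel he
    have hb0 : b = 0 := hdouble b (by calc b + b = -b + b := by rw [hnb]
                                        _ = 0 := neg_add_cancel b)
    simpa [hb0] using ha
  have hK2fix : ∀ x : g, MemK2' σ₁ σ₂ s₁ x → σ₁ x = x → x ∈ s₁ := by
    intro x hx hfix
    obtain ⟨a, ha, b, hb1, hb2, rfl⟩ := hx
    have he : a + -b = a + b := by
      calc a + -b = σ₁ (a + b) := by rw [map_add, (hs1 a ha).1, hb2]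
        _ = a + b := hfix
    have hnb : -b = b := add_left_cancel he
    have hb0 : b = 0 := hdouble b (by calc b + b = -b + b := by rw [hnb]
                                        _ = 0 := neg_add_cancel b)
    simpa [hb0] using ha
  -- the positive part of the support and the key sum T
  set Spos : Finset ℤ := A.support.filter (fun j => 0 < j) with hSpos
  set T : g := ∑ j ∈ Spos, (A j + σ₂ (A j)) with hTdef
  have hT2 : σ₂ T = T := by
    rw [hTdef, map_sum]
    refine Finset.sum_congr rfl ?_
    intro j _
    rw [map_add, hinv2, add_comm]
  set Tp : g := (2⁻¹ : K) • (T + σ₁ T) with hTpdef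
  set Tm : g := (2⁻¹ : K) • (T - σ₁ T) with hTmdef
  have hTp1 : σ₁ Tp = Tp := by rw [hTpdef, map_smul, map_add, hinv1, add_comm]
  have hTp2 : σ₂ Tp = Tp := by rw [hTpdef, map_smul, map_add, hT2, ← hcomm, hT2]
  have hTm1 : σ₁ Tm = -Tm := by
    rw [hTmdef, map_smul, map_sub, hinv1, ← smul_neg, neg_sub]
  have hTm2 : σ₂ Tm = Tm := by rw [hTmdef, map_smul, map_sub, hT2, ← hcomm, hT2]
  have hTpm : Tp + Tm = T := by
    rw [hTpdef, hTmdef, ← smul_add]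
    have h4 : T + σ₁ T + (T - σ₁ T) = (2:K) • T := by rw [two_smul]; abel
    rw [h4, smul_smul, inv_mul_cancel₀ h2, one_smul]
  have hA0even : σ₁ (A 0) = A 0 := (hA 0).1 Even.zero
  obtain ⟨⟨t₁, t₂⟩, ⟨ht₁, ht₂, hTpeq⟩, -⟩ := hkk Tp hTp1 hTp2
  obtain ⟨⟨a₁, a'⟩, ⟨ha₁, ha', hA0eq⟩, -⟩ := hk1dec (A 0) hA0even
  have ht1 : t₁ ∈ s₁ := ht₁
  have ht2 : t₂ ∈ s₂ := ht₂
  have hTpeq' : Tp = t₁ + t₂ := hTpeq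
  have ha1 : a₁ ∈ s₁ := ha₁
  have haM : MemK1' σ₁ σ₂ s₂ a' := ha'
  have hA0eq' : A 0 = a₁ + a' := hA0eq
  -- define ξ
  set f : ℤ → g := fun j => if 0 < j then A j else if j = 0 then a₁ - t₂ else σ₂ (A (-j))
    with hfdef
  set Sneg : Finset ℤ := Spos.image (fun j => -j) with hSneg
  have hfsupp : ∀ j : ℤ, f j ≠ 0 → j ∈ insert (0:ℤ) (Spos ∪ Sneg) := by
    intro j hj
    rcases lt_trichotomy 0 j with h | h | h
    · have hfj : f j = A j := by simp only [hfdef]; rw [if_pos h]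
      refine Finset.mem_insert.mpr (Or.inr (Finset.mem_union_left _ ?_))
      rw [hSpos]
      exact Finset.mem_filter.mpr ⟨Finsupp.mem_support_iff.mpr (hfj ▸ hj), h⟩
    · rw [← h]; exact Finset.mem_insert_self 0 _
    · have hfj : f j = σ₂ (A (-j)) := by
        simp only [hfdef]; rw [if_neg (by omega), if_neg (by omega)]
      have hAnj : A (-j) ≠ 0 := by
        intro h0
        apply hj
        rw [hfj, h0, map_zero]
      refine Finset.mem_insert.mpr (Or.inr (Finset.mem_union_right _ ?_))
      rw [hSneg]
      refine Finset.mem_image.mpr ⟨-j, ?_, by omega⟩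
      rw [hSpos]
      exact Finset.mem_filter.mpr ⟨Finsupp.mem_support_iff.mpr hAnj, by omega⟩
  set ξ : ℤ →₀ g := Finsupp.onFinset _ f hfsupp with hξdef
  have hξapp : ∀ j, ξ j = f j := fun j => rfl
  have hξpos : ∀ j : ℤ, 0 < j → ξ j = A j := by
    intro j hj; rw [hξapp]; simp only [hfdef]; rw [if_pos hj]
  have hξzero : ξ 0 = a₁ - t₂ := by
    rw [hξapp]; simp [hfdef]
  have hξneg : ∀ j : ℤ, j < 0 → ξ j = σ₂ (A (-j)) := by
    intro j hj; rw [hξapp]; simp only [hfdef]; rw [if_neg (by omega), if_neg (by omega)]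
  have hξsym : ∀ j : ℤ, ξ (-j) = σ₂ (ξ j) := by
    intro j
    rcases lt_trichotomy 0 j with h | h | h
    · rw [hξneg (-j) (by omega), neg_neg, hξpos j h]
    · rw [← h, neg_zero, hξzero, map_sub, (hs1 a₁ ha1).2, (hs2 t₂ ht2).2]
    · rw [hξpos (-j) (by omega), hξneg j h, hinv2]
  have hξLt : MemLt σ₁ ξ := by
    intro j
    rcases lt_trichotomy 0 j with h | h | h
    · rw [hξpos j h]; exact hA j
    · rw [← h, hξzero]
      constructor
      · intro _
        rw [map_sub, (hs1 a₁ ha1).1, (hs2 t₂ ht2).1]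
      · intro ho
        exact absurd ho (Int.not_odd_iff_even.mpr Even.zero)
    · constructor
      · intro he
        rw [hξneg j h, hcomm, (hA (-j)).1 (even_neg.mpr he)]
      · intro ho
        rw [hξneg j h, hcomm, (hA (-j)).2 (odd_neg.mpr ho), map_neg]
  have h0nmem : (0:ℤ) ∉ Spos ∪ Sneg := by
    intro hmem
    rcases Finset.mem_union.mp hmem with h | h
    · rw [hSpos] at h
      exact absurd (Finset.mem_filter.mp h).2 (by omega)
    · rw [hSneg] at h
      obtain ⟨k, hk, hk0⟩ := Finset.mem_image.mp h
      rw [hSpos] at hk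
      have := (Finset.mem_filter.mp hk).2
      omega
  have hdisj : Disjoint Spos Sneg := by
    rw [Finset.disjoint_left]
    intro k hk hk'
    rw [hSpos] at hk
    rw [hSneg] at hk'
    obtain ⟨m, hm, hmk⟩ := Finset.mem_image.mp hk'
    rw [hSpos] at hm
    have h1 := (Finset.mem_filter.mp hk).2
    have h2' := (Finset.mem_filter.mp hm).2
    omega
  have hsum : ξ.sum (fun _ x => x) = (a₁ - t₂) + T := by
    have hsupp : ξ.support ⊆ insert 0 (Spos ∪ Sneg) := Finsupp.support_onFinset_subset
    rw [Finsupp.sum_of_support_subset ξ hsupp _ (fun i _ => rfl)]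
    rw [Finset.sum_insert h0nmem, Finset.sum_union hdisj, hξzero]
    have h1 : ∑ j ∈ Spos, ξ j = ∑ j ∈ Spos, A j := by
      refine Finset.sum_congr rfl ?_
      intro j hj
      rw [hSpos] at hj
      exact hξpos j (Finset.mem_filter.mp hj).2
    have h2' : ∑ j ∈ Sneg, ξ j = ∑ j ∈ Spos, σ₂ (A j) := by
      rw [hSneg, Finset.sum_image (by intro a _ b _ hab; exact neg_inj.mp hab)]
      refine Finset.sum_congr rfl ?_
      intro j hj
      rw [hSpos] at hj
      have hjpos := (Finset.mem_filter.mp hj).2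
      rw [hξneg (-j) (by omega), neg_neg]
    rw [h1, h2', hTdef, ← Finset.sum_add_distrib]
  have hsumMem : MemK2' σ₁ σ₂ s₁ (ξ.sum fun _ x => x) := by
    refine ⟨a₁ + t₁, add_mem ha1 ht1, Tm, hTm2, hTm1, ?_⟩
    rw [hsum, ← hTpm, hTpeq']
    abel
  set η : ℤ →₀ g := A - ξ with hηdef
  have hηapp : ∀ j, η j = A j - ξ j := fun j => rfl
  have hηpos : ∀ j : ℤ, 0 < j → η j = 0 := by
    intro j hj
    rw [hηapp, hξpos j hj, sub_self]
  have hηLt : MemLt σ₁ η := by rw [hηdef]; exact memLt_sub hA hξLt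
  have hη0Mem : MemK1' σ₁ σ₂ s₂ (η 0) := by
    have h5 : η 0 = a' + t₂ := by rw [hηapp, hξzero, hA0eq']; abel
    rw [h5]
    exact memK1'_add haM ⟨t₂, ht2, 0, map_zero _, by rw [map_zero, neg_zero], (add_zero t₂).symm⟩
  have hA2 : A = ξ + η := by rw [hηdef]; abel
  refine ⟨(ξ, η), ⟨⟨hξLt, hξsym, hsumMem⟩, ⟨hηLt, hηpos, hη0Mem⟩, hA2⟩, ?_⟩
  rintro ⟨ξ', η'⟩ ⟨hp1, hp2, hA'⟩
  obtain ⟨hξ'Lt, hξ'sym, hξ'sum⟩ := hp1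
  obtain ⟨hη'Lt, hη'pos, hη'0⟩ := hp2
  have hξ'Lt' : MemLt σ₁ ξ' := hξ'Lt
  have hξ'sym' : ∀ j : ℤ, ξ' (-j) = σ₂ (ξ' j) := hξ'sym
  have hξ'sum' : MemK2' σ₁ σ₂ s₁ (ξ'.sum fun _ x => x) := hξ'sum
  have hη'pos' : ∀ j : ℤ, 0 < j → η' j = 0 := hη'pos
  have hη'0' : MemK1' σ₁ σ₂ s₂ (η' 0) := hη'0
  have hA3 : A = ξ' + η' := hA'
  have hdpt : ∀ j : ℤ, ξ j - ξ' j = η' j - η j := by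
    intro j
    have h' : ξ j + η j = ξ' j + η' j := by
      have h6 := congrArg (fun c : ℤ →₀ g => c j) (hA2.symm.trans hA3)
      simpa [Finsupp.add_apply] using h6
    rw [sub_eq_sub_iff_add_eq_add, h']
    exact add_comm _ _
  have hdne : ∀ j : ℤ, j ≠ 0 → ξ j = ξ' j := by
    intro j hj
    rcases lt_or_gt_of_ne hj with h | h
    · have hp : ξ (-j) = ξ' (-j) := by
        have h7 := hdpt (-j)
        rw [hη'pos' (-j) (by omega), hηpos (-j) (by omega), sub_self] at h7
        exact sub_eq_zero.mp h7
      have h1 := hξsym (-j)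
      have h2' := hξ'sym' (-j)
      rw [neg_neg] at h1 h2'
      rw [h1, h2', hp]
    · have h7 := hdpt j
      rw [hη'pos' j h, hηpos j h, sub_self] at h7
      exact sub_eq_zero.mp h7
  set δ : g := ξ 0 - ξ' 0 with hδdef
  have hδ2 : σ₂ δ = δ := by
    have h1 := hξsym 0
    have h2' := hξ'sym' 0
    rw [neg_zero] at h1 h2'
    rw [hδdef, map_sub, ← h1, ← h2']
  have hδ1 : σ₁ δ = δ := by
    rw [hδdef, map_sub, (hξLt 0).1 Even.zero, (hξ'Lt' 0).1 Even.zero]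
  have hδK1 : MemK1' σ₁ σ₂ s₂ δ := by
    rw [hδdef, hdpt 0]
    exact memK1'_sub hη'0' hη0Mem
  have hδK2 : MemK2' σ₁ σ₂ s₁ δ := by
    have hsub : (ξ - ξ').sum (fun _ x => x)
        = (ξ.sum fun _ x => x) - (ξ'.sum fun _ x => x) :=
      Finsupp.sum_sub_index (fun _ _ _ => rfl)
    have hsupp : (ξ - ξ').support ⊆ {0} := by
      intro j hj
      rw [Finsupp.mem_support_iff, Finsupp.sub_apply] at hj
      rw [Finset.mem_singleton]
      by_contra h0
      exact hj (by rw [hdne j h0, sub_self])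
    have hval : (ξ - ξ').sum (fun _ x => x) = δ := by
      rw [Finsupp.sum_of_support_subset _ hsupp _ (fun i _ => rfl), Finset.sum_singleton,
        Finsupp.sub_apply, hδdef]
    have h8 := memK2'_sub hsumMem hξ'sum'
    rw [← hsub, hval] at h8
    exact h8
  have hδ0 : δ = 0 := hs12 δ (hK2fix δ hδK2 hδ1) (hK1fix δ hδK1 hδ2)
  have hξeq : ξ' = ξ := by
    ext j
    rcases eq_or_ne j 0 with rfl | hj
    · have h9 : ξ 0 - ξ' 0 = 0 := hδdef ▸ hδ0
      exact (sub_eq_zero.mp h9).symm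
    · exact (hdne j hj).symm
  have hηeq : η' = η := by
    have h10 : ξ + η = ξ' + η' := hA2.symm.trans hA3
    rw [hξeq] at h10
    exact (add_left_cancel h10).symm
  rw [hξeq, hηeq]

end TwistedUK
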